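/- Let N ≥ 1, n ≥ 1, let β = diag(β_1, …, β_n) be a real diagonal matrix and γ ∈ ℝ^{n×n} a symmetric matrix. For q, p ∈ ℝ^{n×(2N+1)} with columns q_j, p_j ∈ ℝ^n (j = 0, …, 2N), write (q w(x)) = Σ_{j=0}^{2N} q_j w_j(x) ∈ ℝ^n and similarly (p w(x)), and define H(q, p) = (1/2) Σ_{j=0}^{2N} d_j² (q_jᵀ β q_j + p_jᵀ β p_j) − (1/4) ∫_a^b ((q w(x))² + (p w(x))²)ᵀ γ ((q w(x))² + (p w(x))²) dx, where v² denotes the componentwise square of a vector v ∈ ℝ^n. Then H is differentiable, and for all i = 1, …, n and j = 0, …, 2N its partial derivatives are ∂H/∂p_{ij}(q, p) = d_j² β_i p_{ij} − ∫_a^b ( Σ_{k=1}^n γ_{ik} ((q w(x))_k² + (p w(x))_k²) ) (p w(x))_i w_j(x) dx and ∂H/∂q_{ij}(q, p) = d_j² β_i q_{ij} − ∫_a^b ( Σ_{k=1}^n γ_{ik} ((q w(x))_k² + (p w(x))_k²) ) (q w(x))_i w_j(x) dx. -/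

import Mathlib

open Real MeasureTheory intervalIntegral Finset

section Helpers
open Metric Set

lemma w_cont {a b : ℝ} {w : ℕ → ℝ → ℝ}
    (hw0 : ∀ x, w 0 x = 1 / Real.sqrt (b - a))
    (hwodd : ∀ j : ℕ, 1 ≤ j → ∀ x, w (2 * j - 1) x =
      Real.sqrt (2 / (b - a)) * Real.sin (2 * π * j * (x - a) / (b - a)))
    (hweven : ∀ j : ℕ, 1 ≤ j → ∀ x, w (2 * j) x =
      Real.sqrt (2 / (b - a)) * Real.cos (2 * π * j * (x - a) / (b - a)))
    (l : ℕ) : Continuous (w l) := by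
  rcases Nat.even_or_odd l with ⟨j, hj⟩ | ⟨j, hj⟩
  · rcases Nat.eq_zero_or_pos j with rfl | hjpos
    · have : w l = fun _ => 1 / Real.sqrt (b - a) := funext fun x => by
        simpa [hj] using hw0 x
      rw [this]; exact continuous_const
    · have : w l = fun x => Real.sqrt (2 / (b - a)) *
          Real.cos (2 * π * j * (x - a) / (b - a)) := funext fun x => by
        have := hweven j hjpos x
        rwa [show 2 * j = l by omega] at this
      rw [this]; fun_prop
  · have h1 : 1 ≤ j + 1 := le_refl _ |>.trans (Nat.le_add_left _ _)
    have : w l = fun x => Real.sqrt (2 / (b - a)) *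
        Real.sin (2 * π * (j + 1 : ℕ) * (x - a) / (b - a)) := funext fun x => by
      have := hwodd (j + 1) (Nat.le_add_left _ _) x
      rwa [show 2 * (j + 1) - 1 = l by omega] at this
    rw [this]; fun_prop


lemma sq_sum {M : ℕ} (f : Fin M → ℝ) :
    (∑ l, f l) ^ 2 = ∑ m : Fin M × Fin M, f m.1 * f m.2 := by
  rw [sq, Finset.sum_mul_sum]; exact (Fintype.sum_prod_type' (f := fun a b : Fin M => f a * f b)).symm

lemma integral_expand {M n : ℕ} (a b : ℝ) (w : ℕ → ℝ → ℝ)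
    (hw : ∀ l : ℕ, Continuous (w l)) (γ : Fin n → Fin n → ℝ)
    (q p : (Fin n × Fin M) → ℝ) :
    (∫ x in a..b, ∑ i, ∑ k,
        ((∑ l : Fin M, q (i, l) * w (l : ℕ) x) ^ 2
          + (∑ l : Fin M, p (i, l) * w (l : ℕ) x) ^ 2) * γ i k *
        ((∑ l : Fin M, q (k, l) * w (l : ℕ) x) ^ 2
          + (∑ l : Fin M, p (k, l) * w (l : ℕ) x) ^ 2))
    = ∑ i, ∑ k, ∑ m : Fin M × Fin M, ∑ m' : Fin M × Fin M,
        (q (i, m.1) * q (i, m.2) + p (i, m.1) * p (i, m.2)) * γ i k *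
        (q (k, m'.1) * q (k, m'.2) + p (k, m'.1) * p (k, m'.2)) *
        ∫ x in a..b, w (m.1 : ℕ) x * w (m.2 : ℕ) x * (w (m'.1 : ℕ) x * w (m'.2 : ℕ) x) := by
  have hpt : ∀ x, (∑ i, ∑ k,
      ((∑ l : Fin M, q (i, l) * w (l : ℕ) x) ^ 2
        + (∑ l : Fin M, p (i, l) * w (l : ℕ) x) ^ 2) * γ i k *
      ((∑ l : Fin M, q (k, l) * w (l : ℕ) x) ^ 2
        + (∑ l : Fin M, p (k, l) * w (l : ℕ) x) ^ 2))
      = ∑ i, ∑ k, ∑ m : Fin M × Fin M, ∑ m' : Fin M × Fin M,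
        (q (i, m.1) * q (i, m.2) + p (i, m.1) * p (i, m.2)) * γ i k *
        (q (k, m'.1) * q (k, m'.2) + p (k, m'.1) * p (k, m'.2)) *
        (w (m.1 : ℕ) x * w (m.2 : ℕ) x * (w (m'.1 : ℕ) x * w (m'.2 : ℕ) x)) := by
    intro x
    refine Finset.sum_congr rfl fun i _ => Finset.sum_congr rfl fun k _ => ?_
    have key : ∀ r : Fin n, (∑ l : Fin M, q (r, l) * w (l : ℕ) x) ^ 2
        + (∑ l : Fin M, p (r, l) * w (l : ℕ) x) ^ 2
        = ∑ m : Fin M × Fin M, (q (r, m.1) * q (r, m.2) + p (r, m.1) * p (r, m.2)) *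
            (w (m.1 : ℕ) x * w (m.2 : ℕ) x) := by
      intro r
      rw [sq_sum, sq_sum, ← Finset.sum_add_distrib]
      exact Finset.sum_congr rfl fun m _ => by ring
    rw [key i, key k, Finset.sum_mul, Finset.sum_mul]
    refine Finset.sum_congr rfl fun m _ => ?_
    rw [Finset.mul_sum]
    exact Finset.sum_congr rfl fun m' _ => by ring
  simp only [hpt]
  rw [intervalIntegral.integral_finset_sum]
  · refine Finset.sum_congr rfl fun i _ => ?_
    rw [intervalIntegral.integral_finset_sum]
    · refine Finset.sum_congr rfl fun k _ => ?_
      rw [intervalIntegral.integral_finset_sum]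
      · refine Finset.sum_congr rfl fun m _ => ?_
        rw [intervalIntegral.integral_finset_sum]
        · exact Finset.sum_congr rfl fun m' _ => intervalIntegral.integral_const_mul _ _
        · intro m' _
          exact (continuous_const.mul
            (((hw _).mul (hw _)).mul ((hw _).mul (hw _)))).intervalIntegrable _ _
      · intro m _
        exact (Continuous.intervalIntegrable (by
          exact continuous_finset_sum _ fun m' _ => continuous_const.mul
            (((hw _).mul (hw _)).mul ((hw _).mul (hw _)))) _ _)
    · intro k _
      exact (Continuous.intervalIntegrable (by
        exact continuous_finset_sum _ fun m _ => continuous_finset_sum _ fun m' _ =>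
          continuous_const.mul (((hw _).mul (hw _)).mul ((hw _).mul (hw _)))) _ _)
  · intro i _
    exact (Continuous.intervalIntegrable (by
      exact continuous_finset_sum _ fun k _ => continuous_finset_sum _ fun m _ =>
        continuous_finset_sum _ fun m' _ =>
          continuous_const.mul (((hw _).mul (hw _)).mul ((hw _).mul (hw _)))) _ _)


-- derivative of the updated coordinate sum
lemma hS_lem {M n : ℕ} (w : ℕ → ℝ → ℝ) (p : (Fin n × Fin M) → ℝ)
    (i : Fin n) (j : Fin M) (i' : Fin n) (x τ : ℝ) :
    HasDerivAt (fun τ => ∑ l : Fin M, Function.update p (i, j) τ (i', l) * w (l : ℕ) x)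
      (if i' = i then w (j : ℕ) x else 0) τ := by
  have h := HasDerivAt.fun_sum (𝕜 := ℝ) (fun (l : Fin M) (_ : l ∈ Finset.univ) =>
    (show HasDerivAt (fun τ => Function.update p (i, j) τ (i', l) * w (l : ℕ) x)
        (if (i', l) = (i, j) then w (l : ℕ) x else 0) τ by
      by_cases hc : (i', l) = (i, j)
      · have hi : i' = i := congrArg Prod.fst hc
        have hl : l = j := congrArg Prod.snd hc
        subst hi; subst hl
        simp only [Function.update_self, if_pos rfl]
        simpa using (hasDerivAt_id τ).mul_const (w (l : ℕ) x)
      · simp only [Function.update_of_ne hc, if_neg hc]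
        exact hasDerivAt_const _ _))
  refine h.congr_deriv (Eq.symm ?_)
  by_cases hi : i' = i
  · subst hi
    simp [Prod.ext_iff, Finset.sum_ite_eq']
  · simp [Prod.ext_iff, hi]

lemma param_deriv {F F' : ℝ → ℝ → ℝ} {a b τ₀ : ℝ}
    (hF : Continuous fun z : ℝ × ℝ => F z.1 z.2)
    (hF' : Continuous fun z : ℝ × ℝ => F' z.1 z.2)
    (hdiff : ∀ x τ, HasDerivAt (fun τ => F τ x) (F' τ x) τ) :
    HasDerivAt (fun τ => ∫ x in a..b, F τ x) (∫ x in a..b, F' τ₀ x) τ₀ := by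
  have hK : IsCompact (closedBall τ₀ 1 ×ˢ uIcc a b) :=
    (isCompact_closedBall _ _).prod isCompact_uIcc
  obtain ⟨C, hC⟩ := hK.exists_bound_of_continuousOn hF'.continuousOn
  refine (intervalIntegral.hasDerivAt_integral_of_dominated_loc_of_deriv_le
    (F := F) (F' := F') (bound := fun _ => C) (ball_mem_nhds τ₀ one_pos) ?_ ?_ ?_ ?_ ?_ ?_).2
  · exact Filter.Eventually.of_forall fun τ =>
      (hF.comp (Continuous.prodMk_right τ)).aestronglyMeasurable
  · exact (hF.comp (Continuous.prodMk_right τ₀)).intervalIntegrable a b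
  · exact (hF'.comp (Continuous.prodMk_right τ₀)).aestronglyMeasurable
  · exact Filter.Eventually.of_forall fun x hx τ hτ =>
      hC (τ, x) ⟨ball_subset_closedBall hτ, uIoc_subset_uIcc hx⟩
  · exact intervalIntegrable_const
  · exact Filter.Eventually.of_forall fun x _ τ _ => hdiff x τ

lemma alg_lem {n : ℕ} (S A : Fin n → ℝ) (γ : Fin n → Fin n → ℝ)
    (hγ : ∀ i k, γ i k = γ k i) (i : Fin n) (wj : ℝ) :
    4 * ((∑ k, γ i k * A k) * S i * wj)
      = ∑ i', ∑ k, ((2 * S i') * (if i' = i then wj else 0) * γ i' k * A k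
          + A i' * γ i' k * ((2 * S k) * (if k = i then wj else 0))) := by
  have hsplit : ∀ i' k : Fin n,
      (2 * S i') * (if i' = i then wj else 0) * γ i' k * A k
        + A i' * γ i' k * ((2 * S k) * (if k = i then wj else 0))
      = (if i' = i then 2 * S i * wj * γ i k * A k else 0)
        + (if k = i then A i' * γ i i' * (2 * S i * wj) else 0) := by
    intro i' k
    by_cases hh1 : i' = i <;> by_cases hh2 : k = i
    · simp only [hh1, hh2, eq_self_iff_true, if_true]
    · simp only [hh1, eq_self_iff_true, if_true, if_neg hh2]; ring
    · simp only [hh2, if_neg hh1, eq_self_iff_true, if_true]; rw [hγ i i']; ring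
    · simp only [if_neg hh1, if_neg hh2]; ring
  rw [Finset.sum_congr rfl fun i' _ => Finset.sum_congr rfl fun k _ => hsplit i' k]
  simp only [Finset.sum_add_distrib]
  have t1 : (∑ i', ∑ k, if i' = i then 2 * S i * wj * γ i k * A k else 0)
      = ∑ k, 2 * S i * wj * γ i k * A k := by
    rw [Finset.sum_comm]
    refine Finset.sum_congr rfl fun k _ => ?_
    simp
  have t2 : (∑ i', ∑ k, if k = i then A i' * γ i i' * (2 * S i * wj) else 0)
      = ∑ i', A i' * γ i i' * (2 * S i * wj) :=
    Finset.sum_congr rfl fun i' _ => by simp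
  rw [t1, t2, Finset.sum_mul, Finset.sum_mul, Finset.mul_sum, ← Finset.sum_add_distrib]
  exact Finset.sum_congr rfl fun k _ => by ring

lemma keyP {M n : ℕ} (a b : ℝ) (w : ℕ → ℝ → ℝ) (hw : ∀ l : ℕ, Continuous (w l))
    (d : ℕ → ℝ) (β : Fin n → ℝ) (γ : Fin n → Fin n → ℝ) (hγ : ∀ i k, γ i k = γ k i)
    (q p : (Fin n × Fin M) → ℝ) (i : Fin n) (j : Fin M) :
    HasDerivAt (fun τ =>
      (1 / 2) * (∑ j' : Fin M, d (j' : ℕ) ^ 2 *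
          ((∑ i', β i' * (q (i', j')) ^ 2)
            + ∑ i', β i' * (Function.update p (i, j) τ (i', j')) ^ 2))
        - (1 / 4) * ∫ x in a..b, ∑ i', ∑ k,
            ((∑ l : Fin M, q (i', l) * w (l : ℕ) x) ^ 2
              + (∑ l : Fin M, Function.update p (i, j) τ (i', l) * w (l : ℕ) x) ^ 2) * γ i' k *
            ((∑ l : Fin M, q (k, l) * w (l : ℕ) x) ^ 2
              + (∑ l : Fin M, Function.update p (i, j) τ (k, l) * w (l : ℕ) x) ^ 2))
      (d (j : ℕ) ^ 2 * β i * p (i, j)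
        - ∫ x in a..b,
            (∑ k, γ i k * ((∑ l : Fin M, q (k, l) * w (l : ℕ) x) ^ 2
              + (∑ l : Fin M, p (k, l) * w (l : ℕ) x) ^ 2)) *
            (∑ l : Fin M, p (i, l) * w (l : ℕ) x) * w (j : ℕ) x)
      (p (i, j)) := by
  -- kinetic part
  have hKterm : ∀ (j' : Fin M) (i' : Fin n),
      HasDerivAt (fun τ => β i' * (Function.update p (i, j) τ (i', j')) ^ 2)
        (if (i', j') = (i, j) then β i' * (2 * p (i, j)) else 0) (p (i, j)) := by
    intro j' i'
    by_cases hc : (i', j') = (i, j)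
    · have hi : i' = i := congrArg Prod.fst hc
      have hl : j' = j := congrArg Prod.snd hc
      subst hi; subst hl
      simp only [Function.update_self, if_pos rfl]
      simpa using (hasDerivAt_pow 2 (p (i', j'))).const_mul (β i')
    · simp only [Function.update_of_ne hc, if_neg hc]
      exact hasDerivAt_const _ _
  have hK : HasDerivAt (fun τ => ∑ j' : Fin M, d (j' : ℕ) ^ 2 *
      ((∑ i', β i' * (q (i', j')) ^ 2)
        + ∑ i', β i' * (Function.update p (i, j) τ (i', j')) ^ 2))
      (2 * (d (j : ℕ) ^ 2 * β i * p (i, j))) (p (i, j)) := by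
    have h := HasDerivAt.fun_sum (𝕜 := ℝ) fun (j' : Fin M) (_ : j' ∈ Finset.univ) =>
      (((hasDerivAt_const (p (i, j)) (∑ i', β i' * (q (i', j')) ^ 2)).add
        (HasDerivAt.fun_sum fun (i' : Fin n) (_ : i' ∈ Finset.univ) => hKterm j' i')).const_mul
          (d (j' : ℕ) ^ 2))
    refine h.congr_deriv (Eq.symm ?_)
    have h1 : ∀ j' : Fin M,
        ((0 : ℝ) + ∑ i', if (i', j') = (i, j) then β i' * (2 * p (i, j)) else 0)
          = if j' = j then β i * (2 * p (i, j)) else 0 := by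
      intro j'
      by_cases hj' : j' = j
      · subst hj'; simp [Prod.ext_iff, Finset.sum_ite_eq']
      · simp [Prod.ext_iff, hj']
    calc 2 * (d (j : ℕ) ^ 2 * β i * p (i, j))
        = ∑ j' : Fin M, (if j' = j then d (j' : ℕ) ^ 2 * (β i * (2 * p (i, j))) else 0) := by
          rw [Finset.sum_ite_eq' Finset.univ j (fun j' => d (j' : ℕ) ^ 2 * (β i * (2 * p (i, j))))]
          simp; ring
      _ = ∑ j' : Fin M, d (j' : ℕ) ^ 2 *
            ((0 : ℝ) + ∑ i', if (i', j') = (i, j) then β i' * (2 * p (i, j)) else 0) := by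
          refine Finset.sum_congr rfl fun j' _ => ?_
          rw [h1 j', mul_ite, mul_zero]
  -- joint continuity helpers
  have cQ : ∀ i' : Fin n, Continuous fun z : ℝ × ℝ =>
      ∑ l : Fin M, q (i', l) * w (l : ℕ) z.2 := fun i' =>
    continuous_finset_sum _ fun l _ => continuous_const.mul ((hw l).comp continuous_snd)
  have cP : ∀ i' : Fin n, Continuous fun z : ℝ × ℝ =>
      ∑ l : Fin M, Function.update p (i, j) z.1 (i', l) * w (l : ℕ) z.2 := by
    intro i'
    refine continuous_finset_sum _ fun l _ => ?_
    by_cases hc : (i', l) = (i, j)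
    · have hi : i' = i := congrArg Prod.fst hc
      have hl : l = j := congrArg Prod.snd hc
      subst hi; subst hl
      simp only [Function.update_self]
      exact continuous_fst.mul ((hw _).comp continuous_snd)
    · simp only [Function.update_of_ne hc]
      exact continuous_const.mul ((hw _).comp continuous_snd)
  have cA : ∀ i' : Fin n, Continuous fun z : ℝ × ℝ =>
      (∑ l : Fin M, q (i', l) * w (l : ℕ) z.2) ^ 2
        + (∑ l : Fin M, Function.update p (i, j) z.1 (i', l) * w (l : ℕ) z.2) ^ 2 :=
    fun i' => ((cQ i').pow 2).add ((cP i').pow 2)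
  -- pointwise derivative of the integrand
  have hderiv : ∀ (x τ : ℝ), HasDerivAt (fun τ => ∑ i', ∑ k,
      ((∑ l : Fin M, q (i', l) * w (l : ℕ) x) ^ 2
        + (∑ l : Fin M, Function.update p (i, j) τ (i', l) * w (l : ℕ) x) ^ 2) * γ i' k *
      ((∑ l : Fin M, q (k, l) * w (l : ℕ) x) ^ 2
        + (∑ l : Fin M, Function.update p (i, j) τ (k, l) * w (l : ℕ) x) ^ 2))
      (4 * ((∑ k, γ i k * ((∑ l : Fin M, q (k, l) * w (l : ℕ) x) ^ 2
          + (∑ l : Fin M, Function.update p (i, j) τ (k, l) * w (l : ℕ) x) ^ 2)) *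
        (∑ l : Fin M, Function.update p (i, j) τ (i, l) * w (l : ℕ) x) * w (j : ℕ) x)) τ := by
    intro x τ
    have h1 : ∀ i' : Fin n, HasDerivAt (fun τ =>
        (∑ l : Fin M, q (i', l) * w (l : ℕ) x) ^ 2
          + (∑ l : Fin M, Function.update p (i, j) τ (i', l) * w (l : ℕ) x) ^ 2)
        (2 * (∑ l : Fin M, Function.update p (i, j) τ (i', l) * w (l : ℕ) x) *
          (if i' = i then w (j : ℕ) x else 0)) τ := by
      intro i'
      have h' := (hasDerivAt_const τ ((∑ l : Fin M, q (i', l) * w (l : ℕ) x) ^ 2)).add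
        ((hS_lem w p i j i' x τ).fun_pow 2)
      refine h'.congr_deriv (Eq.symm ?_)
      push_cast
      ring
    have h2 := HasDerivAt.fun_sum (𝕜 := ℝ) fun (i' : Fin n) (_ : i' ∈ Finset.univ) =>
      HasDerivAt.fun_sum (𝕜 := ℝ) fun (k : Fin n) (_ : k ∈ Finset.univ) =>
        ((h1 i').mul_const (γ i' k)).mul (h1 k)
    refine h2.congr_deriv (Eq.symm ?_)
    exact alg_lem
      (fun r => ∑ l : Fin M, Function.update p (i, j) τ (r, l) * w (l : ℕ) x)
      (fun r => (∑ l : Fin M, q (r, l) * w (l : ℕ) x) ^ 2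
        + (∑ l : Fin M, Function.update p (i, j) τ (r, l) * w (l : ℕ) x) ^ 2)
      γ hγ i (w (j : ℕ) x)
  -- integral part
  have hJ := param_deriv (a := a) (b := b) (τ₀ := p (i, j))
    (F := fun τ x => ∑ i', ∑ k,
      ((∑ l : Fin M, q (i', l) * w (l : ℕ) x) ^ 2
        + (∑ l : Fin M, Function.update p (i, j) τ (i', l) * w (l : ℕ) x) ^ 2) * γ i' k *
      ((∑ l : Fin M, q (k, l) * w (l : ℕ) x) ^ 2
        + (∑ l : Fin M, Function.update p (i, j) τ (k, l) * w (l : ℕ) x) ^ 2))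
    (F' := fun τ x => 4 * ((∑ k, γ i k * ((∑ l : Fin M, q (k, l) * w (l : ℕ) x) ^ 2
        + (∑ l : Fin M, Function.update p (i, j) τ (k, l) * w (l : ℕ) x) ^ 2)) *
      (∑ l : Fin M, Function.update p (i, j) τ (i, l) * w (l : ℕ) x) * w (j : ℕ) x))
    (continuous_finset_sum _ fun i' _ => continuous_finset_sum _ fun k _ =>
      ((cA i').mul continuous_const).mul (cA k))
    (continuous_const.mul (((continuous_finset_sum _ fun k _ =>
      continuous_const.mul (cA k)).mul (cP i)).mul ((hw (j : ℕ)).comp continuous_snd)))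
    hderiv
  have htot := (hK.const_mul (1 / 2 : ℝ)).sub (hJ.const_mul (1 / 4 : ℝ))
  refine htot.congr_deriv (Eq.symm ?_)
  simp only [Function.update_eq_self]
  rw [intervalIntegral.integral_const_mul]
  ring

lemma keyQ {M n : ℕ} (a b : ℝ) (w : ℕ → ℝ → ℝ) (hw : ∀ l : ℕ, Continuous (w l))
    (d : ℕ → ℝ) (β : Fin n → ℝ) (γ : Fin n → Fin n → ℝ) (hγ : ∀ i k, γ i k = γ k i)
    (q p : (Fin n × Fin M) → ℝ) (i : Fin n) (j : Fin M) :
    HasDerivAt (fun τ =>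
      (1 / 2) * (∑ j' : Fin M, d (j' : ℕ) ^ 2 *
          ((∑ i', β i' * (Function.update q (i, j) τ (i', j')) ^ 2)
            + ∑ i', β i' * (p (i', j')) ^ 2))
        - (1 / 4) * ∫ x in a..b, ∑ i', ∑ k,
            ((∑ l : Fin M, Function.update q (i, j) τ (i', l) * w (l : ℕ) x) ^ 2
              + (∑ l : Fin M, p (i', l) * w (l : ℕ) x) ^ 2) * γ i' k *
            ((∑ l : Fin M, Function.update q (i, j) τ (k, l) * w (l : ℕ) x) ^ 2
              + (∑ l : Fin M, p (k, l) * w (l : ℕ) x) ^ 2))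
      (d (j : ℕ) ^ 2 * β i * q (i, j)
        - ∫ x in a..b,
            (∑ k, γ i k * ((∑ l : Fin M, q (k, l) * w (l : ℕ) x) ^ 2
              + (∑ l : Fin M, p (k, l) * w (l : ℕ) x) ^ 2)) *
            (∑ l : Fin M, q (i, l) * w (l : ℕ) x) * w (j : ℕ) x)
      (q (i, j)) := by
  -- kinetic part
  have hKterm : ∀ (j' : Fin M) (i' : Fin n),
      HasDerivAt (fun τ => β i' * (Function.update q (i, j) τ (i', j')) ^ 2)
        (if (i', j') = (i, j) then β i' * (2 * q (i, j)) else 0) (q (i, j)) := by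
    intro j' i'
    by_cases hc : (i', j') = (i, j)
    · have hi : i' = i := congrArg Prod.fst hc
      have hl : j' = j := congrArg Prod.snd hc
      subst hi; subst hl
      simp only [Function.update_self, if_pos rfl]
      simpa using (hasDerivAt_pow 2 (q (i', j'))).const_mul (β i')
    · simp only [Function.update_of_ne hc, if_neg hc]
      exact hasDerivAt_const _ _
  have hK : HasDerivAt (fun τ => ∑ j' : Fin M, d (j' : ℕ) ^ 2 *
      ((∑ i', β i' * (Function.update q (i, j) τ (i', j')) ^ 2)
        + ∑ i', β i' * (p (i', j')) ^ 2))
      (2 * (d (j : ℕ) ^ 2 * β i * q (i, j))) (q (i, j)) := by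
    have h := HasDerivAt.fun_sum (𝕜 := ℝ) fun (j' : Fin M) (_ : j' ∈ Finset.univ) =>
      (((HasDerivAt.fun_sum fun (i' : Fin n) (_ : i' ∈ Finset.univ) => hKterm j' i').add
        (hasDerivAt_const (q (i, j)) (∑ i', β i' * (p (i', j')) ^ 2))).const_mul
          (d (j' : ℕ) ^ 2))
    refine h.congr_deriv (Eq.symm ?_)
    have h1 : ∀ j' : Fin M,
        ((∑ i', if (i', j') = (i, j) then β i' * (2 * q (i, j)) else 0) + (0 : ℝ))
          = if j' = j then β i * (2 * q (i, j)) else 0 := by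
      intro j'
      by_cases hj' : j' = j
      · subst hj'; simp [Prod.ext_iff, Finset.sum_ite_eq']
      · simp [Prod.ext_iff, hj']
    calc 2 * (d (j : ℕ) ^ 2 * β i * q (i, j))
        = ∑ j' : Fin M, (if j' = j then d (j' : ℕ) ^ 2 * (β i * (2 * q (i, j))) else 0) := by
          rw [Finset.sum_ite_eq' Finset.univ j (fun j' => d (j' : ℕ) ^ 2 * (β i * (2 * q (i, j))))]
          simp; ring
      _ = ∑ j' : Fin M, d (j' : ℕ) ^ 2 *
            ((∑ i', if (i', j') = (i, j) then β i' * (2 * q (i, j)) else 0) + (0 : ℝ)) := by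
          refine Finset.sum_congr rfl fun j' _ => ?_
          rw [h1 j', mul_ite, mul_zero]
  -- joint continuity helpers
  have cPc : ∀ i' : Fin n, Continuous fun z : ℝ × ℝ =>
      ∑ l : Fin M, p (i', l) * w (l : ℕ) z.2 := fun i' =>
    continuous_finset_sum _ fun l _ => continuous_const.mul ((hw l).comp continuous_snd)
  have cQu : ∀ i' : Fin n, Continuous fun z : ℝ × ℝ =>
      ∑ l : Fin M, Function.update q (i, j) z.1 (i', l) * w (l : ℕ) z.2 := by
    intro i'
    refine continuous_finset_sum _ fun l _ => ?_
    by_cases hc : (i', l) = (i, j)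
    · have hi : i' = i := congrArg Prod.fst hc
      have hl : l = j := congrArg Prod.snd hc
      subst hi; subst hl
      simp only [Function.update_self]
      exact continuous_fst.mul ((hw _).comp continuous_snd)
    · simp only [Function.update_of_ne hc]
      exact continuous_const.mul ((hw _).comp continuous_snd)
  have cA : ∀ i' : Fin n, Continuous fun z : ℝ × ℝ =>
      (∑ l : Fin M, Function.update q (i, j) z.1 (i', l) * w (l : ℕ) z.2) ^ 2
        + (∑ l : Fin M, p (i', l) * w (l : ℕ) z.2) ^ 2 :=
    fun i' => ((cQu i').pow 2).add ((cPc i').pow 2)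
  -- pointwise derivative of the integrand
  have hderiv : ∀ (x τ : ℝ), HasDerivAt (fun τ => ∑ i', ∑ k,
      ((∑ l : Fin M, Function.update q (i, j) τ (i', l) * w (l : ℕ) x) ^ 2
        + (∑ l : Fin M, p (i', l) * w (l : ℕ) x) ^ 2) * γ i' k *
      ((∑ l : Fin M, Function.update q (i, j) τ (k, l) * w (l : ℕ) x) ^ 2
        + (∑ l : Fin M, p (k, l) * w (l : ℕ) x) ^ 2))
      (4 * ((∑ k, γ i k * ((∑ l : Fin M, Function.update q (i, j) τ (k, l) * w (l : ℕ) x) ^ 2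
          + (∑ l : Fin M, p (k, l) * w (l : ℕ) x) ^ 2)) *
        (∑ l : Fin M, Function.update q (i, j) τ (i, l) * w (l : ℕ) x) * w (j : ℕ) x)) τ := by
    intro x τ
    have h1 : ∀ i' : Fin n, HasDerivAt (fun τ =>
        (∑ l : Fin M, Function.update q (i, j) τ (i', l) * w (l : ℕ) x) ^ 2
          + (∑ l : Fin M, p (i', l) * w (l : ℕ) x) ^ 2)
        (2 * (∑ l : Fin M, Function.update q (i, j) τ (i', l) * w (l : ℕ) x) *
          (if i' = i then w (j : ℕ) x else 0)) τ := by
      intro i'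
      have h' := ((hS_lem w q i j i' x τ).fun_pow 2).add
        (hasDerivAt_const τ ((∑ l : Fin M, p (i', l) * w (l : ℕ) x) ^ 2))
      refine h'.congr_deriv (Eq.symm ?_)
      push_cast
      ring
    have h2 := HasDerivAt.fun_sum (𝕜 := ℝ) fun (i' : Fin n) (_ : i' ∈ Finset.univ) =>
      HasDerivAt.fun_sum (𝕜 := ℝ) fun (k : Fin n) (_ : k ∈ Finset.univ) =>
        ((h1 i').mul_const (γ i' k)).mul (h1 k)
    refine h2.congr_deriv (Eq.symm ?_)
    exact alg_lem
      (fun r => ∑ l : Fin M, Function.update q (i, j) τ (r, l) * w (l : ℕ) x)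
      (fun r => (∑ l : Fin M, Function.update q (i, j) τ (r, l) * w (l : ℕ) x) ^ 2
        + (∑ l : Fin M, p (r, l) * w (l : ℕ) x) ^ 2)
      γ hγ i (w (j : ℕ) x)
  -- integral part
  have hJ := param_deriv (a := a) (b := b) (τ₀ := q (i, j))
    (F := fun τ x => ∑ i', ∑ k,
      ((∑ l : Fin M, Function.update q (i, j) τ (i', l) * w (l : ℕ) x) ^ 2
        + (∑ l : Fin M, p (i', l) * w (l : ℕ) x) ^ 2) * γ i' k *
      ((∑ l : Fin M, Function.update q (i, j) τ (k, l) * w (l : ℕ) x) ^ 2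
        + (∑ l : Fin M, p (k, l) * w (l : ℕ) x) ^ 2))
    (F' := fun τ x => 4 * ((∑ k, γ i k *
        ((∑ l : Fin M, Function.update q (i, j) τ (k, l) * w (l : ℕ) x) ^ 2
          + (∑ l : Fin M, p (k, l) * w (l : ℕ) x) ^ 2)) *
      (∑ l : Fin M, Function.update q (i, j) τ (i, l) * w (l : ℕ) x) * w (j : ℕ) x))
    (continuous_finset_sum _ fun i' _ => continuous_finset_sum _ fun k _ =>
      ((cA i').mul continuous_const).mul (cA k))
    (continuous_const.mul (((continuous_finset_sum _ fun k _ =>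
      continuous_const.mul (cA k)).mul (cQu i)).mul ((hw (j : ℕ)).comp continuous_snd)))
    hderiv
  have htot := (hK.const_mul (1 / 2 : ℝ)).sub (hJ.const_mul (1 / 4 : ℝ))
  refine htot.congr_deriv (Eq.symm ?_)
  simp only [Function.update_eq_self]
  rw [intervalIntegral.integral_const_mul]
  ring


end Helpers

/-- The semi-discrete Hamiltonian `H(q,p)` of the Manakov system is
differentiable, with partial derivatives
`∂H/∂p_{ij} = d_j² β_i p_{ij} − ∫_a^b (Σ_k γ_{ik} ((qw)_k² + (pw)_k²)) (pw)_i w_j dx` and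
`∂H/∂q_{ij} = d_j² β_i q_{ij} − ∫_a^b (Σ_k γ_{ik} ((qw)_k² + (pw)_k²)) (qw)_i w_j dx`. -/
theorem semidiscrete_hamiltonian_gradient
    (a b : ℝ) (hab : a < b)
    (w : ℕ → ℝ → ℝ)
    (hw0 : ∀ x, w 0 x = 1 / Real.sqrt (b - a))
    (hwodd : ∀ j : ℕ, 1 ≤ j → ∀ x, w (2 * j - 1) x =
      Real.sqrt (2 / (b - a)) * Real.sin (2 * π * j * (x - a) / (b - a)))
    (hweven : ∀ j : ℕ, 1 ≤ j → ∀ x, w (2 * j) x =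
      Real.sqrt (2 / (b - a)) * Real.cos (2 * π * j * (x - a) / (b - a)))
    (d : ℕ → ℝ) (hd : ∀ k : ℕ, d k = 2 * π / (b - a) * (⌈(k : ℝ) / 2⌉ : ℤ))
    (N n : ℕ) (hN : 1 ≤ N) (hn : 1 ≤ n)
    (β : Fin n → ℝ) (γ : Fin n → Fin n → ℝ) (hγ : ∀ i k, γ i k = γ k i)
    (H : ((Fin n × Fin (2 * N + 1)) → ℝ) → ((Fin n × Fin (2 * N + 1)) → ℝ) → ℝ)
    (hH : ∀ q p, H q p =
      (1 / 2) * (∑ j : Fin (2 * N + 1), d (j : ℕ) ^ 2 *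
          ((∑ i, β i * (q (i, j)) ^ 2) + ∑ i, β i * (p (i, j)) ^ 2))
        - (1 / 4) * ∫ x in a..b, ∑ i, ∑ k,
            ((∑ l : Fin (2 * N + 1), q (i, l) * w (l : ℕ) x) ^ 2
              + (∑ l : Fin (2 * N + 1), p (i, l) * w (l : ℕ) x) ^ 2) * γ i k *
            ((∑ l : Fin (2 * N + 1), q (k, l) * w (l : ℕ) x) ^ 2
              + (∑ l : Fin (2 * N + 1), p (k, l) * w (l : ℕ) x) ^ 2)) :
    Differentiable ℝ (fun qp : ((Fin n × Fin (2 * N + 1)) → ℝ) ×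
        ((Fin n × Fin (2 * N + 1)) → ℝ) => H qp.1 qp.2)
    ∧ ∀ (q p : (Fin n × Fin (2 * N + 1)) → ℝ) (i : Fin n) (j : Fin (2 * N + 1)),
      HasDerivAt (fun τ => H q (Function.update p (i, j) τ))
        (d (j : ℕ) ^ 2 * β i * p (i, j)
          - ∫ x in a..b,
              (∑ k, γ i k * ((∑ l : Fin (2 * N + 1), q (k, l) * w (l : ℕ) x) ^ 2
                + (∑ l : Fin (2 * N + 1), p (k, l) * w (l : ℕ) x) ^ 2)) *
              (∑ l : Fin (2 * N + 1), p (i, l) * w (l : ℕ) x) * w (j : ℕ) x)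
        (p (i, j))
      ∧ HasDerivAt (fun τ => H (Function.update q (i, j) τ) p)
        (d (j : ℕ) ^ 2 * β i * q (i, j)
          - ∫ x in a..b,
              (∑ k, γ i k * ((∑ l : Fin (2 * N + 1), q (k, l) * w (l : ℕ) x) ^ 2
                + (∑ l : Fin (2 * N + 1), p (k, l) * w (l : ℕ) x) ^ 2)) *
              (∑ l : Fin (2 * N + 1), q (i, l) * w (l : ℕ) x) * w (j : ℕ) x)
        (q (i, j)) := by
  have hwc : ∀ l : ℕ, Continuous (w l) := fun l => w_cont hw0 hwodd hweven l
  constructor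
  · have hrw : (fun qp : ((Fin n × Fin (2 * N + 1)) → ℝ) ×
        ((Fin n × Fin (2 * N + 1)) → ℝ) => H qp.1 qp.2) = fun qp =>
        (1 / 2) * (∑ j : Fin (2 * N + 1), d (j : ℕ) ^ 2 *
            ((∑ i, β i * (qp.1 (i, j)) ^ 2) + ∑ i, β i * (qp.2 (i, j)) ^ 2))
          - (1 / 4) * ∑ i, ∑ k, ∑ m : Fin (2 * N + 1) × Fin (2 * N + 1),
              ∑ m' : Fin (2 * N + 1) × Fin (2 * N + 1),
              (qp.1 (i, m.1) * qp.1 (i, m.2) + qp.2 (i, m.1) * qp.2 (i, m.2)) * γ i k *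
              (qp.1 (k, m'.1) * qp.1 (k, m'.2) + qp.2 (k, m'.1) * qp.2 (k, m'.2)) *
              ∫ x in a..b, w (m.1 : ℕ) x * w (m.2 : ℕ) x *
                (w (m'.1 : ℕ) x * w (m'.2 : ℕ) x) := funext fun qp => by
      rw [hH, integral_expand a b w hwc γ qp.1 qp.2]
    rw [hrw]
    fun_prop
  · intro q p i j
    constructor
    · simp only [hH]
      exact keyP a b w hwc d β γ hγ q p i j
    · simp only [hH]
      exact keyQ a b w hwc d β γ hγ q p i j
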